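/- Let A be a commutative ring and M an A-module, B = Sym_A(M). Then the natural map M ⊗_A B → Ω_{B/A}, m ⊗ b ↦ (dm)·b, is an isomorphism of B-modules. -/

import Mathlib

/-! The symmetric algebra of a module, realized as a quotient of the tensor algebra. -/

variable (A : Type) [CommRing A] (M : Type) [AddCommGroup M] [Module A M]

/-- The relation imposing commutativity of elements of `M` in the tensor algebra. -/
inductive SymRel : TensorAlgebra A M → TensorAlgebra A M → Prop
  | mul_comm (m m' : M) :
      SymRel (TensorAlgebra.ι A m * TensorAlgebra.ι A m')
        (TensorAlgebra.ι A m' * TensorAlgebra.ι A m)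

/-- The symmetric algebra `Sym_A(M)`. -/
def SymmAlg := RingQuot (SymRel A M)

instance : Ring (SymmAlg A M) := inferInstanceAs (Ring (RingQuot (SymRel A M)))
instance : Algebra A (SymmAlg A M) := inferInstanceAs (Algebra A (RingQuot (SymRel A M)))

/-- The projection from the tensor algebra onto the symmetric algebra. -/
noncomputable def SymmAlg.mk : TensorAlgebra A M →ₐ[A] SymmAlg A M :=
  RingQuot.mkAlgHom A (SymRel A M)

theorem SymmAlg.mk_mul_comm (a : TensorAlgebra A M) :
    ∀ b, SymmAlg.mk A M a * SymmAlg.mk A M b = SymmAlg.mk A M b * SymmAlg.mk A M a := by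
  induction a using TensorAlgebra.induction with
  | algebraMap r => intro b; rw [AlgHom.commutes]; exact Algebra.commutes r _
  | ι m =>
    intro b
    induction b using TensorAlgebra.induction with
    | algebraMap r => rw [AlgHom.commutes]; exact (Algebra.commutes r _).symm
    | ι m' =>
      have h := RingQuot.mkAlgHom_rel A (SymRel.mul_comm (A := A) (M := M) m m')
      rw [map_mul, map_mul] at h
      exact h
    | mul x y hx hy =>
      calc SymmAlg.mk A M (TensorAlgebra.ι A m) * SymmAlg.mk A M (x * y)
          = SymmAlg.mk A M (TensorAlgebra.ι A m) * (SymmAlg.mk A M x * SymmAlg.mk A M y) := by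
            rw [map_mul]
        _ = (SymmAlg.mk A M (TensorAlgebra.ι A m) * SymmAlg.mk A M x) * SymmAlg.mk A M y :=
            (mul_assoc _ _ _).symm
        _ = (SymmAlg.mk A M x * SymmAlg.mk A M (TensorAlgebra.ι A m)) * SymmAlg.mk A M y := by
            rw [hx]
        _ = SymmAlg.mk A M x * (SymmAlg.mk A M (TensorAlgebra.ι A m) * SymmAlg.mk A M y) :=
            mul_assoc _ _ _
        _ = SymmAlg.mk A M x * (SymmAlg.mk A M y * SymmAlg.mk A M (TensorAlgebra.ι A m)) := by
            rw [hy]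
        _ = (SymmAlg.mk A M x * SymmAlg.mk A M y) * SymmAlg.mk A M (TensorAlgebra.ι A m) :=
            (mul_assoc _ _ _).symm
        _ = SymmAlg.mk A M (x * y) * SymmAlg.mk A M (TensorAlgebra.ι A m) := by rw [map_mul]
    | add x y hx hy => rw [map_add, mul_add, add_mul, hx, hy]
  | mul x y hx hy =>
    intro b
    calc SymmAlg.mk A M (x * y) * SymmAlg.mk A M b
        = SymmAlg.mk A M x * (SymmAlg.mk A M y * SymmAlg.mk A M b) := by
          rw [map_mul, mul_assoc]
      _ = SymmAlg.mk A M x * (SymmAlg.mk A M b * SymmAlg.mk A M y) := by rw [hy]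
      _ = (SymmAlg.mk A M x * SymmAlg.mk A M b) * SymmAlg.mk A M y := (mul_assoc _ _ _).symm
      _ = (SymmAlg.mk A M b * SymmAlg.mk A M x) * SymmAlg.mk A M y := by rw [hx]
      _ = SymmAlg.mk A M b * SymmAlg.mk A M (x * y) := by rw [map_mul, mul_assoc]
  | add x y hx hy => intro b; rw [map_add, add_mul, mul_add, hx, hy]

noncomputable instance : CommRing (SymmAlg A M) :=
  { (inferInstance : Ring (SymmAlg A M)) with
    mul_comm := fun a b => by
      obtain ⟨a, rfl⟩ := RingQuot.mkAlgHom_surjective A (SymRel A M) a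
      obtain ⟨b, rfl⟩ := RingQuot.mkAlgHom_surjective A (SymRel A M) b
      exact SymmAlg.mk_mul_comm A M a b }

/-- The canonical inclusion of `M` into the symmetric algebra. -/
noncomputable def SymmAlg.ι : M →ₗ[A] SymmAlg A M :=
  (SymmAlg.mk A M).toLinearMap ∘ₗ TensorAlgebra.ι A

open scoped TensorProduct

noncomputable section

/-- The map `m ↦ d(ι m)` from `M` to the Kähler differentials of `Sym_A(M)`. -/
def dIota : M →ₗ[A] Ω[SymmAlg A M⁄A] :=
  (KaehlerDifferential.D A (SymmAlg A M)).toLinearMap ∘ₗ SymmAlg.ι A M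

/-- The natural map `M ⊗_A Sym_A(M) → Ω_{Sym_A(M)/A}`, `m ⊗ b ↦ (dm)·b`. -/
def koszulMap : M ⊗[A] SymmAlg A M →ₗ[A] Ω[SymmAlg A M⁄A] :=
  TensorProduct.lift
    { toFun := fun m =>
        (LinearMap.toSpanSingleton (SymmAlg A M) (Ω[SymmAlg A M⁄A])
          (dIota A M m)).restrictScalars A
      map_add' := by
        intro m m'
        ext b
        simp [LinearMap.toSpanSingleton_apply, map_add, smul_add]
      map_smul' := by
        intro a m
        ext b
        simp only [LinearMap.coe_restrictScalars, LinearMap.toSpanSingleton_apply,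
          map_smul, RingHom.id_apply, LinearMap.smul_apply]
        rw [smul_comm] }

namespace SymAuxProof

open TrivSqZeroExt

variable (A : Type) [CommRing A] (M : Type) [AddCommGroup M] [Module A M]

open scoped TensorProduct

noncomputable section

/-- The linear map `m ↦ (ι m, 1 ⊗ m)` into the trivial square-zero extension. -/
def lmap : M →ₗ[A] TrivSqZeroExt (SymmAlg A M) (SymmAlg A M ⊗[A] M) where
  toFun m := inl (SymmAlg.ι A M m) + inr ((1 : SymmAlg A M) ⊗ₜ[A] m)
  map_add' m m' := by
    refine TrivSqZeroExt.ext ?_ ?_ <;>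
      simp [TensorProduct.tmul_add, map_add, add_add_add_comm]
  map_smul' a m := by
    refine TrivSqZeroExt.ext ?_ ?_ <;>
      simp [TensorProduct.tmul_smul, map_smul]

theorem lmap_rel : ∀ ⦃x y : TensorAlgebra A M⦄, SymRel A M x y →
    (TensorAlgebra.lift A (lmap A M)) x = (TensorAlgebra.lift A (lmap A M)) y := by
  rintro x y ⟨m, m'⟩
  simp only [map_mul, TensorAlgebra.lift_ι_apply]
  refine TrivSqZeroExt.ext ?_ ?_
  · simp [fst_mul, mul_comm]
  · simp only [snd_mul, fst_add, fst_inl, fst_inr, snd_add, snd_inl, snd_inr, add_zero, zero_add,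
      op_smul_eq_smul]
    exact add_comm _ _

/-- The algebra map `Sym_A(M) → TrivSqZeroExt (Sym_A(M)) (Sym_A(M) ⊗ M)`. -/
def tszeHom : SymmAlg A M →ₐ[A] TrivSqZeroExt (SymmAlg A M) (SymmAlg A M ⊗[A] M) :=
  RingQuot.liftAlgHom A ⟨TensorAlgebra.lift A (lmap A M), lmap_rel A M⟩

theorem tszeHom_ι (m : M) :
    tszeHom A M (SymmAlg.ι A M m)
      = inl (SymmAlg.ι A M m) + inr ((1 : SymmAlg A M) ⊗ₜ[A] m) := by
  calc tszeHom A M (SymmAlg.ι A M m)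
      = TensorAlgebra.lift A (lmap A M) (TensorAlgebra.ι A m) :=
        RingQuot.liftAlgHom_mkAlgHom_apply A _ (lmap_rel A M) _
    _ = _ := by rw [TensorAlgebra.lift_ι_apply]; rfl

theorem tszeHom_fst (b : SymmAlg A M) : (tszeHom A M b).fst = b := by
  obtain ⟨x, rfl⟩ := RingQuot.mkAlgHom_surjective A (SymRel A M) b
  induction x using TensorAlgebra.induction with
  | algebraMap a =>
      rw [AlgHom.commutes]
      show (tszeHom A M (algebraMap A (SymmAlg A M) a)).fst = algebraMap A (SymmAlg A M) a
      rw [AlgHom.commutes, algebraMap_eq_inl', fst_inl]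
  | ι m =>
      have h : RingQuot.mkAlgHom A (SymRel A M) (TensorAlgebra.ι A m) = SymmAlg.ι A M m := rfl
      rw [h, tszeHom_ι]
      simp
  | mul x y hx hy =>
      have e : RingQuot.mkAlgHom A (SymRel A M) (x * y) = SymmAlg.mk A M x * SymmAlg.mk A M y := map_mul _ _ _
      rw [e, map_mul, fst_mul]; exact congrArg₂ (· * ·) hx hy
  | add x y hx hy =>
      have e : RingQuot.mkAlgHom A (SymRel A M) (x + y) = SymmAlg.mk A M x + SymmAlg.mk A M y := map_add _ _ _
      rw [e, map_add, fst_add]; exact congrArg₂ (· + ·) hx hy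

/-- The universal derivation into `Sym_A(M) ⊗ M`. -/
def symDer : Derivation A (SymmAlg A M) (SymmAlg A M ⊗[A] M) where
  toLinearMap :=
    (TrivSqZeroExt.sndHom (SymmAlg A M) (SymmAlg A M ⊗[A] M)).restrictScalars A ∘ₗ
      (tszeHom A M).toLinearMap
  map_one_eq_zero' := by simp
  leibniz' a b := by
    simp only [LinearMap.coe_comp, LinearMap.coe_restrictScalars, Function.comp_apply,
      AlgHom.toLinearMap_apply, sndHom_apply, map_mul, snd_mul, tszeHom_fst, op_smul_eq_smul]

theorem symDer_ι (m : M) : symDer A M (SymmAlg.ι A M m) = (1 : SymmAlg A M) ⊗ₜ[A] m := by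
  show (tszeHom A M (SymmAlg.ι A M m)).snd = _
  rw [tszeHom_ι]
  simp

theorem koszulMap_tmul (m : M) (b : SymmAlg A M) :
    koszulMap A M (m ⊗ₜ[A] b) = b • (KaehlerDifferential.D A (SymmAlg A M)) (SymmAlg.ι A M m) := by
  simp [koszulMap, dIota, LinearMap.toSpanSingleton_apply]

theorem koszulMap_comm_smul (c : SymmAlg A M) (n : SymmAlg A M ⊗[A] M) :
    koszulMap A M (TensorProduct.comm A (SymmAlg A M) M (c • n))
      = c • koszulMap A M (TensorProduct.comm A (SymmAlg A M) M n) := by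
  induction n using TensorProduct.induction_on with
  | zero => simp
  | tmul b m =>
      rw [TensorProduct.smul_tmul']
      simp only [TensorProduct.comm_tmul, koszulMap_tmul, smul_eq_mul, mul_smul]
  | add x y hx hy => simp only [smul_add, map_add, hx, hy]

theorem koszulMap_comm_symDer (b : SymmAlg A M) :
    koszulMap A M (TensorProduct.comm A (SymmAlg A M) M (symDer A M b))
      = KaehlerDifferential.D A (SymmAlg A M) b := by
  obtain ⟨x, rfl⟩ := RingQuot.mkAlgHom_surjective A (SymRel A M) b
  induction x using TensorAlgebra.induction with
  | algebraMap a =>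
      rw [AlgHom.commutes]
      show koszulMap A M (TensorProduct.comm A (SymmAlg A M) M
        (symDer A M (algebraMap A (SymmAlg A M) a))) = KaehlerDifferential.D A (SymmAlg A M)
          (algebraMap A (SymmAlg A M) a)
      rw [Derivation.map_algebraMap, Derivation.map_algebraMap]; simp
  | ι m =>
      have h : RingQuot.mkAlgHom A (SymRel A M) (TensorAlgebra.ι A m) = SymmAlg.ι A M m := rfl
      rw [h, symDer_ι, TensorProduct.comm_tmul, koszulMap_tmul, one_smul]
  | mul x y hx hy =>
      have e : RingQuot.mkAlgHom A (SymRel A M) (x * y) = SymmAlg.mk A M x * SymmAlg.mk A M y := map_mul _ _ _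
      rw [e, Derivation.leibniz, Derivation.leibniz, map_add, map_add,
        koszulMap_comm_smul, koszulMap_comm_smul]
      exact congrArg₂ (· + ·) (congrArg (SymmAlg.mk A M x • ·) hy) (congrArg (SymmAlg.mk A M y • ·) hx)
  | add x y hx hy =>
      have e : RingQuot.mkAlgHom A (SymRel A M) (x + y) = SymmAlg.mk A M x + SymmAlg.mk A M y := map_add _ _ _
      rw [e]; simp only [map_add]; exact congrArg₂ (· + ·) hx hy

/-- The inverse of the Koszul map. -/
def invMap : Ω[SymmAlg A M⁄A] →ₗ[A] M ⊗[A] SymmAlg A M :=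
  (TensorProduct.comm A (SymmAlg A M) M).toLinearMap ∘ₗ
    ((symDer A M).liftKaehlerDifferential).restrictScalars A

theorem left_inv (ω : Ω[SymmAlg A M⁄A]) : koszulMap A M (invMap A M ω) = ω := by
  have hspan := KaehlerDifferential.span_range_derivation A (SymmAlg A M)
  have hω : ω ∈ Submodule.span (SymmAlg A M)
      (Set.range (KaehlerDifferential.D A (SymmAlg A M))) := hspan ▸ Submodule.mem_top
  induction hω using Submodule.span_induction with
  | mem x hx =>
      obtain ⟨b, rfl⟩ := hx
      show koszulMap A M (TensorProduct.comm A (SymmAlg A M) M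
        ((symDer A M).liftKaehlerDifferential (KaehlerDifferential.D A (SymmAlg A M) b))) = _
      rw [Derivation.liftKaehlerDifferential_comp_D, koszulMap_comm_symDer]
  | zero => simp
  | add x y _ _ hx hy =>
      show koszulMap A M (TensorProduct.comm A (SymmAlg A M) M
        ((symDer A M).liftKaehlerDifferential (x + y))) = _
      rw [map_add, map_add, map_add]
      exact congrArg₂ (· + ·) hx hy
  | smul c x _ hx =>
      show koszulMap A M (TensorProduct.comm A (SymmAlg A M) M
        ((symDer A M).liftKaehlerDifferential (c • x))) = _
      have hx' : koszulMap A M (TensorProduct.comm A (SymmAlg A M) M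
        ((symDer A M).liftKaehlerDifferential x)) = x := hx
      rw [map_smul, koszulMap_comm_smul, hx']

theorem right_inv (t : M ⊗[A] SymmAlg A M) : invMap A M (koszulMap A M t) = t := by
  induction t using TensorProduct.induction_on with
  | zero => simp
  | tmul m b =>
      rw [koszulMap_tmul]
      show TensorProduct.comm A (SymmAlg A M) M
        ((symDer A M).liftKaehlerDifferential
          (b • KaehlerDifferential.D A (SymmAlg A M) (SymmAlg.ι A M m))) = _
      rw [map_smul, Derivation.liftKaehlerDifferential_comp_D, symDer_ι,
        TensorProduct.smul_tmul', smul_eq_mul, mul_one, TensorProduct.comm_tmul]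
  | add x y hx hy => rw [map_add, map_add, hx, hy]

end
end SymAuxProof

/-- the natural map `M ⊗_A B → Ω_{B/A}`, `m ⊗ b ↦ (dm)·b`, for
`B = Sym_A(M)`, is an isomorphism (of `B`-modules). -/
theorem stmt_5 : Function.Bijective (koszulMap A M) :=
  Function.bijective_iff_has_inverse.mpr
    ⟨SymAuxProof.invMap A M, SymAuxProof.right_inv A M, SymAuxProof.left_inv A M⟩

end
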